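/- Let k > 0, δ ≥ 0, and let p ≤ p₀ be reals with d := p₀ − p satisfying δ + d > 0. Set Δ⁺ = (kδ + 2d + √((kδ + 2d)² − k²δ²))/k and Δ⁻ = (kδ + 2d − √((kδ + 2d)² − k²δ²))/k. Then (kδ + 2d)² − k²δ² ≥ 0, Δ⁻ ≤ δ ≤ Δ⁺, Δ⁺ > 0, and p + (k/(4Δ⁺))·(Δ⁺ − δ)² = p₀. -/

import Mathlib

lemma threshold_aux (k δ d s : ℝ) (hk : k ≠ 0) (hN : k*δ+2*d+s ≠ 0)
    (key : (2*d+s)^2 = 4*d*(k*δ+2*d+s)) :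
    (k / (4 * ((k*δ+2*d+s)/k))) * (((k*δ+2*d+s)/k) - δ)^2 = d := by
  field_simp
  linear_combination key

/-- The threshold variation `Δ⁺` is the larger root of `q(Δ) = p₀` where
`q(Δ) = p + (k/(4Δ))(Δ - δ)²` (Proposition III.1, equation (7)). -/
theorem threshold_root_properties
    (k δ p p₀ : ℝ) (hk : 0 < k) (hδ : 0 ≤ δ) (hp : p ≤ p₀)
    (hpos : 0 < δ + (p₀ - p)) :
    let d := p₀ - p
    let Δplus := (k * δ + 2 * d + Real.sqrt ((k * δ + 2 * d) ^ 2 - k ^ 2 * δ ^ 2)) / k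
    let Δminus := (k * δ + 2 * d - Real.sqrt ((k * δ + 2 * d) ^ 2 - k ^ 2 * δ ^ 2)) / k
    (k * δ + 2 * d) ^ 2 - k ^ 2 * δ ^ 2 ≥ 0 ∧
    Δminus ≤ δ ∧ δ ≤ Δplus ∧ 0 < Δplus ∧
    p + (k / (4 * Δplus)) * (Δplus - δ) ^ 2 = p₀ := by
  intro d Δplus Δminus
  have hd : 0 ≤ d := by simp only [d]; linarith
  have hpd : 0 < δ + d := hpos
  have hE0 : 0 ≤ (k * δ + 2 * d) ^ 2 - k ^ 2 * δ ^ 2 := by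
    nlinarith [mul_nonneg hd hd, mul_nonneg (mul_nonneg hk.le hδ) hd]
  set s := Real.sqrt ((k * δ + 2 * d) ^ 2 - k ^ 2 * δ ^ 2) with hs
  have hs0 : 0 ≤ s := Real.sqrt_nonneg _
  have hs2 : s ^ 2 = (k * δ + 2 * d) ^ 2 - k ^ 2 * δ ^ 2 := Real.sq_sqrt hE0
  have hsum : 0 < k * δ + 2 * d := by
    nlinarith [mul_pos hk hpd, mul_nonneg hk.le hδ, mul_nonneg hk.le hd]
  have hnum : 0 < k * δ + 2 * d + s := by linarith
  have hΔpos : 0 < Δplus := div_pos hnum hk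
  have h2ds : 2 * d ≤ s := by
    nlinarith [hs2, mul_nonneg (mul_nonneg hk.le hd) hδ, mul_nonneg hd hs0]
  refine ⟨hE0, ?_, ?_, hΔpos, ?_⟩
  · show (k * δ + 2 * d - s) / k ≤ δ
    rw [div_le_iff₀ hk]
    nlinarith
  · show δ ≤ (k * δ + 2 * d + s) / k
    rw [le_div_iff₀ hk]
    nlinarith
  · show p + (k / (4 * Δplus)) * (Δplus - δ) ^ 2 = p₀
    have hk' : (k : ℝ) ≠ 0 := ne_of_gt hk
    have hN : k * δ + 2 * d + s ≠ 0 := ne_of_gt hnum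
    have key : (2 * d + s) ^ 2 = 4 * d * (k * δ + 2 * d + s) := by
      linear_combination hs2
    have h2 : (k / (4 * Δplus)) * (Δplus - δ) ^ 2 = d :=
      threshold_aux k δ d s hk' hN key
    have hd' : d = p₀ - p := rfl
    linarith [h2]
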